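/- Combining the two bounds: under the Lanczos bidiagonalization relation AQ_k = P_{k+1}B_k with Q_k spanning K_k(AᵀA, Aᵀb), the rank-k approximation error γ_k = ‖A − P_{k+1}B_kQ_kᵀ‖ satisfies σ_{k+1} ≤ γ_k ≤ σ_{k+1} + σ₁‖sin Θ(V_k, V_k^s)‖. -/

import Mathlib

open Matrix

/-- Spectral (operator 2-) norm of a real matrix. -/
noncomputable def specNorm {m n : ℕ} (M : Matrix (Fin m) (Fin n) ℝ) : ℝ :=
  ‖LinearMap.toContinuousLinearMap (Matrix.toEuclideanLin M)‖

noncomputable def eN {n : ℕ} (x : Fin n → ℝ) : ℝ := Real.sqrt (∑ i, x i ^ 2)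

lemma eN_nonneg {n : ℕ} (x : Fin n → ℝ) : 0 ≤ eN x := Real.sqrt_nonneg _

lemma eN_eq_norm {n : ℕ} (x : Fin n → ℝ) :
    ‖(WithLp.equiv 2 (Fin n → ℝ)).symm x‖ = eN x := by
  rw [EuclideanSpace.norm_eq]
  simp [eN, sq_abs]

lemma specNorm_nonneg {m n : ℕ} (M : Matrix (Fin m) (Fin n) ℝ) : 0 ≤ specNorm M :=
  norm_nonneg _

lemma mulVec_eN_le {m n : ℕ} (M : Matrix (Fin m) (Fin n) ℝ) (x : Fin n → ℝ) :
    eN (M *ᵥ x) ≤ specNorm M * eN x := by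
  have h := (LinearMap.toContinuousLinearMap (Matrix.toEuclideanLin M)).le_opNorm
    ((WithLp.equiv 2 (Fin n → ℝ)).symm x)
  rw [LinearMap.coe_toContinuousLinearMap'] at h
  rwa [(show ∀ v, Matrix.toEuclideanLin M ((WithLp.equiv 2 (Fin n → ℝ)).symm v) = (WithLp.equiv 2 (Fin m → ℝ)).symm (M *ᵥ v) from fun _ => rfl), eN_eq_norm, eN_eq_norm] at h

lemma specNorm_le {m n : ℕ} (M : Matrix (Fin m) (Fin n) ℝ) (c : ℝ) (hc : 0 ≤ c)
    (h : ∀ x, eN (M *ᵥ x) ≤ c * eN x) : specNorm M ≤ c := by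
  apply ContinuousLinearMap.opNorm_le_bound _ hc
  intro x
  have hx : x = (WithLp.equiv 2 (Fin n → ℝ)).symm ((WithLp.equiv 2 (Fin n → ℝ)) x) := rfl
  rw [LinearMap.coe_toContinuousLinearMap']
  rw [hx, (show ∀ v, Matrix.toEuclideanLin M ((WithLp.equiv 2 (Fin n → ℝ)).symm v) = (WithLp.equiv 2 (Fin m → ℝ)).symm (M *ᵥ v) from fun _ => rfl), eN_eq_norm, eN_eq_norm]
  exact h _

lemma sumsq_eq_dot {n : ℕ} (x : Fin n → ℝ) : ∑ i, x i ^ 2 = x ⬝ᵥ x := by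
  simp [dotProduct, sq]

lemma orth_eN {m n : ℕ} (U : Matrix (Fin m) (Fin n) ℝ) (hU : U.transpose * U = 1)
    (x : Fin n → ℝ) : eN (U *ᵥ x) = eN x := by
  unfold eN
  congr 1
  rw [sumsq_eq_dot, sumsq_eq_dot]
  rw [Matrix.dotProduct_mulVec, ← Matrix.mulVec_transpose, Matrix.mulVec_mulVec, hU,
    Matrix.one_mulVec]

lemma proj_eN_le {n k : ℕ} (Q : Matrix (Fin n) (Fin k) ℝ) (hQ : Q.transpose * Q = 1)
    (x : Fin n → ℝ) : eN ((1 - Q * Q.transpose) *ᵥ x) ≤ eN x := by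
  unfold eN
  apply Real.sqrt_le_sqrt
  rw [sumsq_eq_dot, sumsq_eq_dot]
  have hy : (1 - Q * Q.transpose) *ᵥ x = x - Q *ᵥ (Q.transpose *ᵥ x) := by
    rw [Matrix.sub_mulVec, Matrix.one_mulVec, Matrix.mulVec_mulVec]
  rw [hy]
  set w := Q.transpose *ᵥ x with hw
  have h1 : x ⬝ᵥ (Q *ᵥ w) = w ⬝ᵥ w := by
    rw [Matrix.dotProduct_mulVec, ← Matrix.mulVec_transpose, hw]
  have h2 : (Q *ᵥ w) ⬝ᵥ x = w ⬝ᵥ w := by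
    rw [dotProduct_comm, h1]
  have h3 : (Q *ᵥ w) ⬝ᵥ (Q *ᵥ w) = w ⬝ᵥ w := by
    rw [Matrix.dotProduct_mulVec, ← Matrix.mulVec_transpose, Matrix.mulVec_mulVec, hQ,
      Matrix.one_mulVec]
  have hww : (0:ℝ) ≤ w ⬝ᵥ w := by rw [← sumsq_eq_dot]; positivity
  rw [sub_dotProduct, dotProduct_sub, dotProduct_sub, h1, h2, h3]
  linarith

def diagM (m n : ℕ) (d : Fin n → ℝ) : Matrix (Fin m) (Fin n) ℝ :=
  Matrix.of fun (i : Fin m) (j : Fin n) => if (i : ℕ) = (j : ℕ) then d j else 0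

lemma diagM_mulVec {m n : ℕ} (d : Fin n → ℝ) (x : Fin n → ℝ) :
    (diagM m n d) *ᵥ x = fun i : Fin m =>
      if h : (i : ℕ) < n then d ⟨i, h⟩ * x ⟨i, h⟩ else 0 := by
  funext i
  by_cases h : (i : ℕ) < n
  · simp only [dif_pos h, Matrix.mulVec, dotProduct]
    rw [Finset.sum_eq_single (⟨(i:ℕ), h⟩ : Fin n)]
    · simp [diagM]
    · intro j _ hj
      have : (i : ℕ) ≠ (j : ℕ) := by
        intro he; apply hj; exact Fin.ext he.symm
      simp [diagM, this]
    · simp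
  · simp only [dif_neg h, Matrix.mulVec, dotProduct]
    apply Finset.sum_eq_zero
    intro j _
    have : (i : ℕ) ≠ (j : ℕ) := by omega
    simp [diagM, this]

lemma sum_dite_fin {m n : ℕ} (h : n ≤ m) (f : Fin n → ℝ) :
    (∑ i : Fin m, if h' : (i : ℕ) < n then f ⟨i, h'⟩ else 0) = ∑ j : Fin n, f j := by
  rw [← Finset.sum_subset (Finset.subset_univ
    ((Finset.univ : Finset (Fin n)).map (Fin.castLEEmb h)))]
  · rw [Finset.sum_map]
    apply Finset.sum_congr rfl
    intro j _
    rw [dif_pos (by simp : ((Fin.castLEEmb h) j : ℕ) < n)]; congr 1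
  · intro i _ hi
    rw [dif_neg]
    intro h'
    apply hi
    simp only [Finset.mem_map, Finset.mem_univ, true_and]
    exact ⟨⟨(i:ℕ), h'⟩, Fin.ext rfl⟩

lemma eNsq_diag {m n : ℕ} (h : n ≤ m) (d : Fin n → ℝ) (x : Fin n → ℝ) :
    ∑ i : Fin m, ((diagM m n d) *ᵥ x) i ^ 2 = ∑ j : Fin n, (d j * x j) ^ 2 := by
  rw [diagM_mulVec]
  rw [← sum_dite_fin h (fun j => (d j * x j) ^ 2)]
  apply Finset.sum_congr rfl
  intro i _
  by_cases h' : (i : ℕ) < n <;> simp [h']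

lemma specNorm_orth_le {m n : ℕ} (U : Matrix (Fin m) (Fin n) ℝ)
    (hU : U.transpose * U = 1) : specNorm U ≤ 1 :=
  specNorm_le _ 1 zero_le_one fun x => by rw [orth_eN U hU, one_mul]

lemma specNorm_proj_le {n k : ℕ} (Q : Matrix (Fin n) (Fin k) ℝ)
    (hQ : Q.transpose * Q = 1) : specNorm (1 - Q * Q.transpose) ≤ 1 :=
  specNorm_le _ 1 zero_le_one fun x => by rw [one_mul]; exact proj_eN_le Q hQ x

lemma specNorm_diag_le {m n : ℕ} (h : n ≤ m) (d : Fin n → ℝ) (c : ℝ) (hc : 0 ≤ c)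
    (hd : ∀ j, |d j| ≤ c) : specNorm (diagM m n d) ≤ c := by
  apply specNorm_le _ c hc
  intro x
  unfold eN
  rw [eNsq_diag h]
  have h1 : ∑ j : Fin n, (d j * x j) ^ 2 ≤ c ^ 2 * ∑ j : Fin n, x j ^ 2 := by
    rw [Finset.mul_sum]
    apply Finset.sum_le_sum
    intro j _
    rw [mul_pow]
    apply mul_le_mul_of_nonneg_right _ (sq_nonneg _)
    calc d j ^ 2 = |d j| ^ 2 := (sq_abs _).symm
    _ ≤ c ^ 2 := pow_le_pow_left₀ (abs_nonneg _) (hd j) 2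
  calc Real.sqrt (∑ j : Fin n, (d j * x j) ^ 2)
      ≤ Real.sqrt (c ^ 2 * ∑ j : Fin n, x j ^ 2) := Real.sqrt_le_sqrt h1
    _ = c * Real.sqrt (∑ j : Fin n, x j ^ 2) := by
        rw [Real.sqrt_mul (sq_nonneg c), Real.sqrt_sq hc]

lemma specNorm_mul_le {m n p : ℕ} (M : Matrix (Fin m) (Fin n) ℝ)
    (N : Matrix (Fin n) (Fin p) ℝ) :
    specNorm (M * N) ≤ specNorm M * specNorm N := by
  apply specNorm_le _ _ (mul_nonneg (specNorm_nonneg M) (specNorm_nonneg N))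
  intro x
  rw [← Matrix.mulVec_mulVec]
  calc eN (M *ᵥ (N *ᵥ x)) ≤ specNorm M * eN (N *ᵥ x) := mulVec_eN_le M _
    _ ≤ specNorm M * (specNorm N * eN x) :=
        mul_le_mul_of_nonneg_left (mulVec_eN_le N x) (specNorm_nonneg M)
    _ = specNorm M * specNorm N * eN x := by ring

lemma specNorm_mul_le_of {m n p : ℕ} {M : Matrix (Fin m) (Fin n) ℝ}
    {N : Matrix (Fin n) (Fin p) ℝ} {a b : ℝ} (hM : specNorm M ≤ a)
    (hN : specNorm N ≤ b) (hb : 0 ≤ b) :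
    specNorm (M * N) ≤ a * b :=
  (specNorm_mul_le M N).trans (mul_le_mul hM hN (specNorm_nonneg N)
    ((specNorm_nonneg M).trans hM))

lemma specNorm_add_le {m n : ℕ} (M N : Matrix (Fin m) (Fin n) ℝ) :
    specNorm (M + N) ≤ specNorm M + specNorm N := by
  unfold specNorm
  rw [map_add, map_add]
  exact norm_add_le _ _

lemma le_specNorm_of {m n : ℕ} (M : Matrix (Fin m) (Fin n) ℝ) (x : Fin n → ℝ)
    (hx : 0 < eN x) (c : ℝ) (h : c * eN x ≤ eN (M *ᵥ x)) : c ≤ specNorm M := by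
  have := h.trans (mulVec_eN_le M x)
  exact le_of_mul_le_mul_right this hx

lemma truncDiag_mul {m n k p : ℕ} (hk : k ≤ n) (d : Fin n → ℝ)
    (W : Matrix (Fin n) (Fin p) ℝ) :
    diagM m n (fun j => if (j : ℕ) < k then d j else 0) * W =
      diagM m k (fun j => d (Fin.castLE hk j)) *
        (Matrix.of fun (i : Fin k) (l : Fin p) => W (Fin.castLE hk i) l) := by
  ext i l
  simp only [Matrix.mul_apply, diagM, Matrix.of_apply]
  by_cases hik : (i : ℕ) < k
  · rw [Finset.sum_eq_single (⟨(i : ℕ), hik.trans_le hk⟩ : Fin n),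
      Finset.sum_eq_single (⟨(i : ℕ), hik⟩ : Fin k)]
    · simp only [if_pos rfl]
      rw [if_pos hik]
      rfl
    · intro j _ hj
      have : (i : ℕ) ≠ (j : ℕ) := fun he => hj (Fin.ext he.symm)
      simp [this]
    · simp
    · intro j _ hj
      have : (i : ℕ) ≠ (j : ℕ) := fun he => hj (Fin.ext he.symm)
      simp [this]
    · simp
  · rw [Finset.sum_eq_zero, Finset.sum_eq_zero]
    · intro j _
      have : (i : ℕ) ≠ (j : ℕ) := fun he => hik (he ▸ j.isLt)
      simp [this]
    · intro j _
      by_cases he : (i : ℕ) = (j : ℕ)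
      · have : ¬ ((j : ℕ) < k) := he ▸ hik
        simp [he, this]
      · simp [he]

lemma diag_mul_inj {m n p : ℕ} (hp : p ≤ n) (d : Fin n → ℝ) :
    diagM m n d * diagM n p (fun _ => 1) = diagM m p (fun l => d (Fin.castLE hp l)) := by
  ext i l
  simp only [Matrix.mul_apply, diagM, Matrix.of_apply]
  rw [Finset.sum_eq_single (Fin.castLE hp l)]
  · simp only [Fin.coe_castLE, if_pos rfl, mul_one]; simp
  · intro j _ hj
    have : (j : ℕ) ≠ (l : ℕ) := by
      intro he; apply hj; exact Fin.ext (by simpa using he)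
    simp [this]
  · simp

/-- under the Lanczos bidiagonalization relation `A Q_k = P_{k+1} B_k`
with the columns of `Q_k` an orthonormal basis of `K_k(AᵀA, Aᵀb)`, the rank-`k`
approximation error `γ_k = ‖A − P_{k+1} B_k Q_kᵀ‖` satisfies
`σ_{k+1} ≤ γ_k ≤ σ_{k+1} + σ₁·‖sin Θ(V_k, V_k^s)‖`. -/
theorem gamma_two_sided_bound (m n k : ℕ) (hk : k < n) (hmn : n ≤ m)
    (A : Matrix (Fin m) (Fin n) ℝ)
    (U : Matrix (Fin m) (Fin m) ℝ) (hU : U.transpose * U = 1) (hU' : U * U.transpose = 1)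
    (V : Matrix (Fin n) (Fin n) ℝ) (hV : V.transpose * V = 1) (hV' : V * V.transpose = 1)
    (σ : Fin n → ℝ) (hσpos : ∀ i, 0 < σ i) (hσanti : Antitone σ)
    (hA : A = U * (Matrix.of fun (i : Fin m) (j : Fin n) =>
      if (i : ℕ) = (j : ℕ) then σ j else 0) * V.transpose)
    (b : Fin m → ℝ)
    (Q : Matrix (Fin n) (Fin k) ℝ) (hQ : Q.transpose * Q = 1)
    (P : Matrix (Fin m) (Fin (k + 1)) ℝ) (hP : P.transpose * P = 1)
    (B : Matrix (Fin (k + 1)) (Fin k) ℝ)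
    (hAQ : A * Q = P * B)
    (hQspan : Submodule.span ℝ (Set.range fun j : Fin k => Q.transpose j) =
      Submodule.span ℝ (Set.range fun i : Fin k =>
        ((A.transpose * A) ^ (i : ℕ)) *ᵥ (A.transpose *ᵥ b)))
    (Vkt : Matrix (Fin k) (Fin n) ℝ)
    (hVkt : Vkt = Matrix.of fun (i : Fin k) (j : Fin n) => V j (Fin.castLE (le_of_lt hk) i)) :
    σ ⟨k, hk⟩ ≤ specNorm (A - P * B * Q.transpose) ∧
      specNorm (A - P * B * Q.transpose) ≤
        σ ⟨k, hk⟩ + σ ⟨0, by omega⟩ * specNorm (Vkt * (1 - Q * Q.transpose)) := by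
  have hkn : k + 1 ≤ n := hk
  have hA' : A = U * diagM m n σ * V.transpose := hA
  have hσk : (0:ℝ) < σ ⟨k, hk⟩ := hσpos _
  constructor
  · -- lower bound
    set J : Matrix (Fin n) (Fin (k+1)) ℝ := diagM n (k+1) (fun _ => 1) with hJ
    set M0 : Matrix (Fin k) (Fin (k+1)) ℝ := Q.transpose * (V * J) with hM0
    set M1 : Matrix (Fin (k+1)) (Fin (k+1)) ℝ :=
      Matrix.of fun i j => if h : (i : ℕ) < k then M0 ⟨(i:ℕ), h⟩ j else 0 with hM1
    have hdet : M1.det = 0 := by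
      apply Matrix.det_eq_zero_of_row_eq_zero ⟨k, Nat.lt_succ_self k⟩
      intro j
      simp [hM1]
    obtain ⟨z, hz0, hzz⟩ := Matrix.exists_mulVec_eq_zero_iff.mpr hdet
    have hM0z : M0 *ᵥ z = 0 := by
      funext i
      have h1 := congrFun hzz (Fin.castSucc i)
      simp only [Pi.zero_apply] at h1
      simp only [Pi.zero_apply]
      rw [← h1]
      simp only [Matrix.mulVec, dotProduct]
      apply Finset.sum_congr rfl
      intro j _
      congr 1
      have : ((Fin.castSucc i : Fin (k+1)) : ℕ) < k := i.isLt
      simp only [hM1, Matrix.of_apply, dif_pos this]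
      congr 1
    set x : Fin n → ℝ := V *ᵥ (J *ᵥ z) with hx
    have hQx : Q.transpose *ᵥ x = 0 := by
      have he : M0 *ᵥ z = Q.transpose *ᵥ x := by
        rw [hM0, hx, ← Matrix.mulVec_mulVec, ← Matrix.mulVec_mulVec]
      rw [← he, hM0z]
    have hTx : (A - P * B * Q.transpose) *ᵥ x = A *ᵥ x := by
      rw [Matrix.sub_mulVec]
      have : (P * B * Q.transpose) *ᵥ x = 0 := by
        rw [← Matrix.mulVec_mulVec, hQx, Matrix.mulVec_zero]
      rw [this, sub_zero]
    set D2 : Matrix (Fin m) (Fin (k+1)) ℝ := diagM m (k+1) (fun l => σ (Fin.castLE hkn l))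
      with hD2
    have hAx : A *ᵥ x = U *ᵥ (D2 *ᵥ z) := by
      rw [hx, Matrix.mulVec_mulVec, Matrix.mulVec_mulVec, Matrix.mulVec_mulVec]
      congr 1
      rw [hA', Matrix.mul_assoc (U * diagM m n σ) V.transpose V, hV, Matrix.mul_one,
        Matrix.mul_assoc U, hJ, diag_mul_inj hkn σ, hD2]
    have hz_pos : 0 < eN z := by
      obtain ⟨i, hi⟩ := Function.ne_iff.mp hz0
      simp only [Pi.zero_apply] at hi
      apply Real.sqrt_pos.mpr
      have h1 : z i ^ 2 ≤ ∑ l, z l ^ 2 :=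
        Finset.single_le_sum (fun l _ => sq_nonneg (z l)) (Finset.mem_univ i)
      have h2 : 0 < z i ^ 2 := by rcases lt_or_gt_of_ne hi with h | h <;> nlinarith
      linarith
    have heJ : eN (J *ᵥ z) = eN z := by
      unfold eN
      rw [hJ, eNsq_diag hkn]
      simp
    have hex : eN x = eN z := by
      rw [hx, orth_eN V hV, heJ]
    have heD2 : σ ⟨k, hk⟩ * eN z ≤ eN (D2 *ᵥ z) := by
      unfold eN
      rw [hD2, eNsq_diag (hkn.trans hmn)]
      have h1 : σ ⟨k, hk⟩ ^ 2 * ∑ l : Fin (k+1), z l ^ 2 ≤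
          ∑ l : Fin (k+1), (σ (Fin.castLE hkn l) * z l) ^ 2 := by
        rw [Finset.mul_sum]
        apply Finset.sum_le_sum
        intro l _
        rw [mul_pow]
        apply mul_le_mul_of_nonneg_right _ (sq_nonneg _)
        apply pow_le_pow_left₀ hσk.le
        exact hσanti (by rw [Fin.le_def]; simpa using Nat.lt_succ_iff.mp l.isLt)
      calc σ ⟨k, hk⟩ * Real.sqrt (∑ l : Fin (k+1), z l ^ 2)
          = Real.sqrt (σ ⟨k, hk⟩ ^ 2 * ∑ l : Fin (k+1), z l ^ 2) := by
            rw [Real.sqrt_mul (sq_nonneg _), Real.sqrt_sq hσk.le]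
        _ ≤ _ := Real.sqrt_le_sqrt h1
    apply le_specNorm_of _ x (hex ▸ hz_pos)
    rw [hTx, hAx, orth_eN U hU, hex]
    exact heD2
  · -- upper bound
    set s := specNorm (Vkt * (1 - Q * Q.transpose)) with hs
    have hs0 : 0 ≤ s := specNorm_nonneg _
    have hT : A - P * B * Q.transpose = A * (1 - Q * Q.transpose) := by
      rw [Matrix.mul_sub, Matrix.mul_one, ← Matrix.mul_assoc, hAQ]
    set dhi : Fin n → ℝ := fun j => if (j : ℕ) < k then 0 else σ j with hdhi
    set dlo : Fin n → ℝ := fun j => if (j : ℕ) < k then σ j else 0 with hdlo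
    have hsplit : diagM m n σ = diagM m n dhi + diagM m n dlo := by
      ext i j
      by_cases h : (i : ℕ) = (j : ℕ) <;> simp [diagM, h, hdhi, hdlo]
      split_ifs <;> ring
    set Clo : Matrix (Fin m) (Fin k) ℝ :=
      diagM m k (fun j => σ (Fin.castLE (le_of_lt hk) j)) with hClo
    have hVktW : (Matrix.of fun (i : Fin k) (l : Fin n) =>
        V.transpose (Fin.castLE (le_of_lt hk) i) l) = Vkt := by
      rw [hVkt]; rfl
    have hlo : diagM m n dlo * V.transpose = Clo * Vkt := by
      rw [hdlo, truncDiag_mul (le_of_lt hk) σ V.transpose, hVktW, hClo]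
    have hdecomp : A - P * B * Q.transpose =
        U * diagM m n dhi * V.transpose * (1 - Q * Q.transpose) +
        (U * Clo) * (Vkt * (1 - Q * Q.transpose)) := by
      rw [hT, hA', hsplit, Matrix.mul_add, Matrix.add_mul, Matrix.add_mul]
      congr 1
      rw [Matrix.mul_assoc U (diagM m n dlo) V.transpose, hlo, ← Matrix.mul_assoc,
        ← Matrix.mul_assoc, Matrix.mul_assoc (U * Clo)]
    have hVt : specNorm V.transpose ≤ 1 := by
      apply specNorm_orth_le
      rw [Matrix.transpose_transpose]
      exact hV'
    have hdhi_bd : ∀ j, |dhi j| ≤ σ ⟨k, hk⟩ := by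
      intro j
      have hj : dhi j = if (j : ℕ) < k then 0 else σ j := rfl
      rw [hj]
      by_cases h : (j : ℕ) < k
      · rw [if_pos h]; simpa using hσk.le
      · rw [if_neg h, abs_of_pos (hσpos j)]
        exact hσanti (by rw [Fin.le_def]; exact Nat.le_of_not_lt h)
    have hσ0 : (0:ℝ) < σ ⟨0, by omega⟩ := hσpos _
    have hClo_bd : specNorm Clo ≤ σ ⟨0, by omega⟩ := by
      apply specNorm_diag_le (le_of_lt (hk.trans_le hmn)) _ _ hσ0.le
      intro j
      rw [abs_of_pos (hσpos _)]
      exact hσanti (by rw [Fin.le_def]; exact Nat.zero_le _)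
    have h1 : specNorm (U * diagM m n dhi * V.transpose * (1 - Q * Q.transpose)) ≤
        σ ⟨k, hk⟩ := by
      have ha : specNorm (U * diagM m n dhi) ≤ 1 * σ ⟨k, hk⟩ :=
        specNorm_mul_le_of (specNorm_orth_le U hU)
          (specNorm_diag_le hmn dhi _ hσk.le hdhi_bd) hσk.le
      have hb : specNorm (U * diagM m n dhi * V.transpose) ≤ (1 * σ ⟨k, hk⟩) * 1 :=
        specNorm_mul_le_of ha hVt zero_le_one
      have hc : specNorm (U * diagM m n dhi * V.transpose * (1 - Q * Q.transpose)) ≤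
          ((1 * σ ⟨k, hk⟩) * 1) * 1 :=
        specNorm_mul_le_of hb (specNorm_proj_le Q hQ) zero_le_one
      linarith
    have h2 : specNorm ((U * Clo) * (Vkt * (1 - Q * Q.transpose))) ≤
        σ ⟨0, by omega⟩ * s := by
      have ha : specNorm (U * Clo) ≤ 1 * σ ⟨0, by omega⟩ :=
        specNorm_mul_le_of (specNorm_orth_le U hU) hClo_bd hσ0.le
      have hb := specNorm_mul_le (U * Clo) (Vkt * (1 - Q * Q.transpose))
      calc specNorm ((U * Clo) * (Vkt * (1 - Q * Q.transpose)))
          ≤ specNorm (U * Clo) * s := hb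
        _ ≤ (1 * σ ⟨0, by omega⟩) * s := mul_le_mul_of_nonneg_right ha hs0
        _ = σ ⟨0, by omega⟩ * s := by ring
    calc specNorm (A - P * B * Q.transpose)
        = specNorm (U * diagM m n dhi * V.transpose * (1 - Q * Q.transpose) +
            (U * Clo) * (Vkt * (1 - Q * Q.transpose))) := by rw [← hdecomp]
      _ ≤ _ + _ := specNorm_add_le _ _
      _ ≤ σ ⟨k, hk⟩ + σ ⟨0, by omega⟩ * s := add_le_add h1 h2
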